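/- Let G_0 = K_1 ∨ Θ(2,2,2) (the cone over the Theta graph with three internally disjoint paths of length two between a pair of endpoints). Then P(G_0,4) = 120 and P_DP(G_0,4) ≤ 104; in particular P_DP(G_0,4) < P(G_0,4). -/

import Mathlib

open SimpleGraph

/-- An `m`-fold cover of a graph `G`, with lists canonically labeled by `Fin m`. -/
structure DPCover {V : Type} (G : SimpleGraph V) (m : ℕ) where
  H : SimpleGraph (V × Fin m)
  part_complete : ∀ (v : V) (a b : Fin m), a ≠ b → H.Adj (v, a) (v, b)
  cross : ∀ (u v : V) (a b : Fin m), u ≠ v → H.Adj (u, a) (v, b) → G.Adj u v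
  matching_right : ∀ (u v : V) (a b b' : Fin m), u ≠ v →
    H.Adj (u, a) (v, b) → H.Adj (u, a) (v, b') → b = b'
  matching_left : ∀ (u v : V) (a a' b : Fin m), u ≠ v →
    H.Adj (u, a) (v, b) → H.Adj (u, a') (v, b) → a = a'

/-- A cover is full if every matching between lists of adjacent vertices is perfect. -/
def DPCover.IsFull {V : Type} {G : SimpleGraph V} {m : ℕ} (C : DPCover G m) : Prop :=
  ∀ u v : V, G.Adj u v → ∀ a : Fin m, ∃ b : Fin m, C.H.Adj (u, a) (v, b)

/-- An `H`-coloring: a choice of one list element per vertex forming an independent set. -/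
def DPCover.IsColoring {V : Type} {G : SimpleGraph V} {m : ℕ} (C : DPCover G m)
    (c : V → Fin m) : Prop :=
  ∀ u v : V, ¬ C.H.Adj (u, c u) (v, c v)

/-- The number of `H`-colorings of `G` with respect to the cover `C`. -/
noncomputable def dpCount {V : Type} {G : SimpleGraph V} {m : ℕ} (C : DPCover G m) : ℕ :=
  Nat.card {c : V → Fin m // C.IsColoring c}

/-- `N(P, C)`: the number of `H`-colorings containing the set `P` of cover vertices. -/
noncomputable def NCount {V : Type} {G : SimpleGraph V} {m : ℕ} (C : DPCover G m)
    (P : Set (V × Fin m)) : ℕ :=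
  Nat.card {c : V → Fin m // C.IsColoring c ∧ ∀ p ∈ P, c p.1 = p.2}

/-- The DP color function: minimum number of colorings over all `m`-fold covers. -/
noncomputable def PDP {V : Type} (G : SimpleGraph V) (m : ℕ) : ℕ :=
  sInf {n : ℕ | ∃ C : DPCover G m, dpCount C = n}

/-- The number of proper `m`-colorings (the chromatic polynomial evaluated at `m`). -/
noncomputable def properCount {V : Type} (G : SimpleGraph V) (m : ℕ) : ℕ :=
  Nat.card {c : V → Fin m // ∀ u v : V, G.Adj u v → c u ≠ c v}

/-- A cover has a canonical labeling if lists can be renamed so all cross edges are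
`(u,j)(v,j)`. -/
def DPCover.HasCanonicalLabeling {V : Type} {G : SimpleGraph V} {m : ℕ}
    (C : DPCover G m) : Prop :=
  ∃ σ : V → Equiv.Perm (Fin m), ∀ u v : V, G.Adj u v → ∀ j : Fin m,
    C.H.Adj (u, σ u j) (v, σ v j)

/-- `G0 = K_1 ∨ Θ(2,2,2)`: the cone over `K_{2,3}` (with `none` the universal vertex,
`some (Sum.inl a)` the degree-3 vertices `v₁, v₂` of the Theta graph, and
`some (Sum.inr b)` the degree-2 vertices `u₁, u₂, u₃`). -/
def G0 : SimpleGraph (Option (Fin 2 ⊕ Fin 3)) :=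
  SimpleGraph.fromRel (fun x y => x = none ∨
    ∃ a b, x = some (Sum.inl a) ∧ y = some (Sum.inr b))

/-! ## Auxiliary construction: a twisted 4-fold cover of `G0` with 104 colorings -/

instance : DecidableRel G0.Adj := fun x y => by
  rw [G0, SimpleGraph.fromRel_adj]; infer_instance

abbrev V6 := Option (Fin 2 ⊕ Fin 3)

/-- Shift of the matching on the edge `v_a u_b`: a cyclic shift by 1 on `v₂ u₃`,
identity elsewhere. -/
def shiftOf : Fin 2 → Fin 3 → Fin 4 := fun a b => if a = 1 ∧ b = 2 then 1 else 0

/-- One direction of the cross edges of the cover. -/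
def crossB : V6 → Fin 4 → V6 → Fin 4 → Bool
  | none, a, some _, b => a == b
  | some (Sum.inl i), a, some (Sum.inr j), b => b == a + shiftOf i j
  | _, _, _, _ => false

/-- Adjacency (as a boolean) of the cover graph. -/
def adjB : V6 × Fin 4 → V6 × Fin 4 → Bool
  | (x, a), (y, b) =>
    if x = y then a != b else crossB x a y b || crossB y b x a

/-- The cover graph: complete on each fiber, with perfect matchings between fibers of
adjacent vertices, twisted by a cyclic shift on the edge `v₂ u₃`. -/
def CH : SimpleGraph (V6 × Fin 4) where
  Adj p q := adjB p q = true
  symm := ⟨fun p q h => by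
    revert h; show adjB p q = true → adjB q p = true; revert p q; decide⟩
  loopless := ⟨fun p h => by
    revert h; show ¬ adjB p p = true; revert p; decide⟩

instance : DecidableRel CH.Adj := fun p q => by
  unfold CH; infer_instance

set_option maxRecDepth 100000 in
/-- The twisted 4-fold cover of `G0`. -/
def C0 : DPCover G0 4 where
  H := CH
  part_complete := by decide
  cross := by decide
  matching_right := by decide
  matching_left := by decide

instance : DecidablePred (C0.IsColoring) := fun c =>
  (inferInstance : Decidable (∀ u v : V6, ¬ CH.Adj (u, c u) (v, c v)))

instance : Fintype {c : V6 → Fin 4 // C0.IsColoring c} := Subtype.fintype _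

set_option maxRecDepth 100000 in
set_option maxHeartbeats 4000000 in
theorem dpCount_C0 : dpCount C0 = 104 := by
  rw [dpCount, Nat.card_eq_fintype_card]
  decide

set_option maxRecDepth 100000 in
set_option maxHeartbeats 4000000 in
theorem properCount_G0 : properCount G0 4 = 120 := by
  rw [properCount, Nat.card_eq_fintype_card]
  decide

theorem PDP_G0_counterexample :
    properCount G0 4 = 120 ∧ PDP G0 4 ≤ 104 ∧ PDP G0 4 < properCount G0 4 := by
  have hle : PDP G0 4 ≤ 104 := by
    rw [PDP]
    exact Nat.sInf_le ⟨C0, dpCount_C0⟩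
  refine ⟨properCount_G0, hle, ?_⟩
  rw [properCount_G0]
  omega
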